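/- The map ρ : 𝒢 → 𝒫([0,1]) sending g to the pushforward g_*(Leb|_{[0,1)}) of Lebesgue measure on [0,1) under g is a bijection from 𝒢 onto the set 𝒫([0,1]) of Borel probability measures on [0,1], and ρ is a homeomorphism when 𝒢 is equipped with the L²([0,1], dx)-metric and 𝒫([0,1]) with the topology of weak convergence of probability measures. -/

import Mathlib

open Set MeasureTheory ENNReal

noncomputable section

instance : Fact ((1 : ℝ≥0∞) ≤ 2) := ⟨by norm_num⟩

/-- Lebesgue measure on `[0,1)`. -/
def leb01 : Measure ℝ := volume.restrict (Ico (0:ℝ) 1)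

/-- The set `𝒢 ⊆ L²([0,1], dx)` of (classes of) nondecreasing right-continuous
functions `g : [0,1) → [0,1]`. -/
def GG : Set (Lp ℝ 2 leb01) :=
  {f | ∃ g : ℝ → ℝ, MonotoneOn g (Ico (0:ℝ) 1) ∧
    (∀ t ∈ Ico (0:ℝ) 1, ContinuousWithinAt g (Ici t) t) ∧
    (∀ t ∈ Ico (0:ℝ) 1, g t ∈ Icc (0:ℝ) 1) ∧ ⇑f =ᵐ[leb01] g}

namespace QAux

open ProbabilityTheory Filter Topology

instance : IsProbabilityMeasure leb01 := by
  constructor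
  simp [leb01, Real.volume_Ico]

lemma leb01_ae_mem : ∀ᵐ t ∂leb01, t ∈ Ico (0:ℝ) 1 :=
  ae_restrict_mem measurableSet_Ico

lemma leb01_apply (S : Set ℝ) : leb01 S = volume (S ∩ Ico (0:ℝ) 1) :=
  Measure.restrict_apply' measurableSet_Ico

/-- The set whose infimum is the (right-continuous) quantile function. -/
def QSet (μ : Measure ℝ) (t : ℝ) : Set ℝ :=
  {x | x ∈ Icc (0:ℝ) 1 ∧ t < cdf μ x} ∪ {1}

/-- The right-continuous quantile function of `μ`. -/
def quant (μ : Measure ℝ) (t : ℝ) : ℝ := sInf (QSet μ t)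

variable {μ : Measure ℝ} {t x : ℝ}

lemma one_mem_QSet : (1:ℝ) ∈ QSet μ t := Or.inr rfl

lemma QSet_subset : QSet μ t ⊆ Icc (0:ℝ) 1 := by
  rintro x (hx | hx)
  · exact hx.1
  · simp only [mem_singleton_iff] at hx; subst hx; exact ⟨zero_le_one, le_refl 1⟩

lemma QSet_bddBelow : BddBelow (QSet μ t) :=
  ⟨0, fun x hx => (QSet_subset hx).1⟩

lemma quant_mem : quant μ t ∈ Icc (0:ℝ) 1 := by
  constructor
  · exact le_csInf ⟨1, one_mem_QSet⟩ (fun x hx => (QSet_subset hx).1)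
  · exact csInf_le QSet_bddBelow one_mem_QSet

lemma quant_mono : Monotone (quant μ) := by
  intro s t hst
  apply csInf_le_csInf QSet_bddBelow ⟨1, one_mem_QSet⟩
  rintro x (hx | hx)
  · exact Or.inl ⟨hx.1, lt_of_le_of_lt hst hx.2⟩
  · exact Or.inr hx

lemma measurable_quant : Measurable (quant μ) := quant_mono.measurable

lemma quant_le_of_lt_cdf (hx : x ∈ Icc (0:ℝ) 1) (h : t < cdf μ x) : quant μ t ≤ x :=
  csInf_le QSet_bddBelow (Or.inl ⟨hx, h⟩)

section WithSupport

variable [IsProbabilityMeasure μ] (hs : μ (Icc (0:ℝ) 1)ᶜ = 0)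
include hs

lemma cdf_eq_zero_of_neg (hx : x < 0) : cdf μ x = 0 := by
  rw [cdf_eq_real, measureReal_def]
  have : μ (Iic x) = 0 := by
    refine le_antisymm (le_trans (measure_mono ?_) hs.le) zero_le
    intro y hy
    simp only [mem_compl_iff, mem_Icc, not_and_or, not_le]
    exact Or.inl (lt_of_le_of_lt hy hx)
  simp [this]

lemma cdf_eq_one_of_le (hx : (1:ℝ) ≤ x) : cdf μ x = 1 := by
  rw [cdf_eq_real, measureReal_def]
  have h1 : μ (Icc (0:ℝ) 1) = 1 := by
    rwa [← prob_compl_eq_zero_iff measurableSet_Icc]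
  have : μ (Iic x) = 1 := by
    refine le_antisymm prob_le_one ?_
    rw [← h1]
    exact measure_mono (fun y hy => le_trans hy.2 hx)
  simp [this]

lemma lt_cdf_of_quant_le (ht1 : t < 1) (hq : quant μ t ≤ x) {y : ℝ} (hy : x < y) :
    t < cdf μ y := by
  obtain ⟨z, hz, hzy⟩ := exists_lt_of_csInf_lt ⟨1, one_mem_QSet⟩ (lt_of_le_of_lt hq hy)
  rcases hz with hz | hz
  · exact lt_of_lt_of_le hz.2 (monotone_cdf μ hzy.le)
  · simp only [mem_singleton_iff] at hz; subst hz
    rw [cdf_eq_one_of_le hs hzy.le]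
    exact ht1

lemma le_cdf_of_quant_le (ht1 : t < 1) (hq : quant μ t ≤ x) : t ≤ cdf μ x := by
  have htd : Tendsto (cdf μ) (nhdsWithin x (Ioi x)) (nhds (cdf μ x)) :=
    ((cdf μ).right_continuous x).mono_left (nhdsWithin_mono x Ioi_subset_Ici_self)
  refine ge_of_tendsto htd ?_
  filter_upwards [self_mem_nhdsWithin] with y hy
  exact (lt_cdf_of_quant_le hs ht1 hq hy).le

lemma quant_le_of_forall (ht0 : 0 ≤ t) (h : ∀ y, x < y → t < cdf μ y) :
    quant μ t ≤ x := by
  by_cases h1 : (1:ℝ) ≤ x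
  · exact le_trans quant_mem.2 h1
  push_neg at h1
  by_cases hx0 : (0:ℝ) ≤ x
  · refine le_of_forall_pos_le_add (fun ε hε => ?_)
    refine le_trans (le_trans (quant_le_of_lt_cdf ⟨?_, min_le_right _ _⟩
      (h _ (lt_min (by linarith) h1))) (min_le_left _ _)) (le_refl _)
    exact le_min (by linarith) zero_le_one
  · push_neg at hx0
    exfalso
    have := h (x/2) (by linarith)
    rw [cdf_eq_zero_of_neg hs (by linarith)] at this
    exact absurd (lt_of_le_of_lt ht0 this) (lt_irrefl 0)

lemma quant_map : leb01.map (quant μ) = μ := by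
  have : IsProbabilityMeasure (leb01.map (quant μ)) :=
    Measure.isProbabilityMeasure_map measurable_quant.aemeasurable
  refine Measure.ext_of_Iic _ _ (fun x => ?_)
  rw [Measure.map_apply measurable_quant measurableSet_Iic]
  have hpre : quant μ ⁻¹' Iic x = {t | quant μ t ≤ x} := rfl
  rw [hpre, leb01_apply, ← ofReal_cdf μ x]
  have hc0 : 0 ≤ cdf μ x := cdf_nonneg μ x
  have hc1 : cdf μ x ≤ 1 := cdf_le_one μ x
  refine le_antisymm ?_ ?_
  · have hsub : {t | quant μ t ≤ x} ∩ Ico (0:ℝ) 1 ⊆ Icc 0 (cdf μ x) := by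
      rintro t ⟨ht, ht0, ht1⟩
      exact ⟨ht0, le_cdf_of_quant_le hs ht1 ht⟩
    calc volume ({t | quant μ t ≤ x} ∩ Ico (0:ℝ) 1) ≤ volume (Icc 0 (cdf μ x)) :=
          measure_mono hsub
      _ = ENNReal.ofReal (cdf μ x) := by rw [Real.volume_Icc]; ring_nf
  · have hsub : Ico (0:ℝ) (cdf μ x) ⊆ {t | quant μ t ≤ x} ∩ Ico (0:ℝ) 1 := by
      rintro t ⟨ht0, htc⟩
      have htx : t < 1 := lt_of_lt_of_le htc hc1
      refine ⟨?_, ht0, htx⟩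
      by_cases hx0 : (0:ℝ) ≤ x
      · by_cases hx1 : x ≤ 1
        · exact quant_le_of_lt_cdf ⟨hx0, hx1⟩ htc
        · push_neg at hx1
          exact le_trans quant_mem.2 hx1.le
      · push_neg at hx0
        rw [cdf_eq_zero_of_neg hs hx0] at htc
        exact absurd htc (not_lt.2 ht0)
    calc ENNReal.ofReal (cdf μ x) = volume (Ico (0:ℝ) (cdf μ x)) := by
          rw [Real.volume_Ico]; ring_nf
      _ ≤ volume ({t | quant μ t ≤ x} ∩ Ico (0:ℝ) 1) := measure_mono hsub

end WithSupport

lemma quant_rightCont (ht1 : t < 1) : ContinuousWithinAt (quant μ) (Ici t) t := by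
  rw [ContinuousWithinAt]
  rw [tendsto_order]
  constructor
  · intro a ha
    filter_upwards [self_mem_nhdsWithin] with u hu
    exact lt_of_lt_of_le ha (quant_mono hu)
  · intro b hb
    obtain ⟨z, hz, hzb⟩ := exists_lt_of_csInf_lt ⟨1, one_mem_QSet⟩ hb
    rcases hz with hz | hz
    · -- z ∈ Icc, t < cdf μ z ; pick s ∈ (t, cdf μ z)
      set s := (t + cdf μ z) / 2 with hs_def
      have hts : t < s := by simp only [hs_def]; linarith [hz.2]
      have hsc : s < cdf μ z := by simp only [hs_def]; linarith [hz.2]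
      filter_upwards [Ico_mem_nhdsGE_of_mem (by exact ⟨le_refl t, hts⟩ : t ∈ Ico t s)]
        with u hu
      calc quant μ u ≤ quant μ s := quant_mono hu.2.le
        _ ≤ z := quant_le_of_lt_cdf hz.1 hsc
        _ < b := hzb
    · simp only [mem_singleton_iff] at hz; subst hz
      set s := (t + 1) / 2 with hs_def
      have hts : t < s := by simp only [hs_def]; linarith
      filter_upwards [Ico_mem_nhdsGE_of_mem (by exact ⟨le_refl t, hts⟩ : t ∈ Ico t s)]
        with u hu
      calc quant μ u ≤ quant μ s := quant_mono hu.2.le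
        _ ≤ 1 := quant_mem.2
        _ < b := hzb

/-- Uniqueness: a monotone right-continuous `[0,1]`-valued function on `[0,1)` whose
distribution is `μ` coincides with the quantile function of `μ` on `[0,1)`. -/
lemma eq_quant {g : ℝ → ℝ} (hmono : MonotoneOn g (Ico (0:ℝ) 1))
    (hrc : ∀ t ∈ Ico (0:ℝ) 1, ContinuousWithinAt g (Ici t) t)
    (hval : ∀ t ∈ Ico (0:ℝ) 1, g t ∈ Icc (0:ℝ) 1)
    [IsProbabilityMeasure μ] (hs : μ (Icc (0:ℝ) 1)ᶜ = 0)
    (hmap : ∀ x, leb01 {u | g u ≤ x} = μ (Iic x)) :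
    ∀ t ∈ Ico (0:ℝ) 1, g t = quant μ t := by
  intro t ht
  obtain ⟨ht0, ht1⟩ := ht
  have hIic : ∀ y : ℝ, μ (Iic y) = volume ({u | g u ≤ y} ∩ Ico (0:ℝ) 1) := by
    intro y; rw [← hmap y, leb01_apply]
  refine le_antisymm ?_ ?_
  · -- quant μ t ≤ g t
    by_contra hcon
    push_neg at hcon
    set y := (quant μ t + g t)/2 with hydef
    have hy1 : quant μ t < y := by simp only [hydef]; linarith
    have hy2 : y < g t := by simp only [hydef]; linarith
    have hcy : t < cdf μ y := lt_cdf_of_quant_le hs ht1 (le_refl _) hy1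
    have hle : cdf μ y ≤ t := by
      rw [cdf_eq_real, measureReal_def]
      have hsub : {u | g u ≤ y} ∩ Ico (0:ℝ) 1 ⊆ Ico (0:ℝ) t := by
        rintro u ⟨hu, hu0, hu1⟩
        refine ⟨hu0, ?_⟩
        by_contra hut
        push_neg at hut
        exact absurd (lt_of_le_of_lt hu hy2)
          (not_lt.2 (hmono ⟨ht0, ht1⟩ ⟨hu0, hu1⟩ hut))
      have : μ (Iic y) ≤ ENNReal.ofReal t := by
        rw [hIic y]
        calc volume ({u | g u ≤ y} ∩ Ico (0:ℝ) 1) ≤ volume (Ico (0:ℝ) t) :=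
              measure_mono hsub
          _ = ENNReal.ofReal t := by rw [Real.volume_Ico]; ring_nf
      calc (μ (Iic y)).toReal ≤ (ENNReal.ofReal t).toReal :=
            ENNReal.toReal_mono ENNReal.ofReal_ne_top this
        _ = t := ENNReal.toReal_ofReal ht0
    linarith
  · -- g t ≤ quant μ t
    refine quant_le_of_forall hs ht0 (fun y hy => ?_)
    have hev : {u : ℝ | g u < y} ∈ nhdsWithin t (Ici t) := hrc t ⟨ht0, ht1⟩ (Iio_mem_nhds hy)
    obtain ⟨s₀, hs₀, hsub⟩ := mem_nhdsGE_iff_exists_Ico_subset.1 hev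
    set s := min s₀ ((t+1)/2) with hsdef
    have hts : t < s := lt_min hs₀ (by linarith)
    have hs1 : s < 1 := lt_of_le_of_lt (min_le_right _ _) (by linarith)
    have hsub2 : Ico (0:ℝ) s ⊆ {u | g u ≤ y} ∩ Ico (0:ℝ) 1 := by
      rintro u ⟨hu0, hus⟩
      have hu1 : u < 1 := lt_trans hus hs1
      refine ⟨?_, hu0, hu1⟩
      rcases lt_or_ge u t with hut | htu
      · exact le_trans (hmono ⟨hu0, hu1⟩ ⟨ht0, ht1⟩ hut.le) hy.le
      · have h2 : g u < y := hsub ⟨htu, lt_of_lt_of_le hus (min_le_left _ _)⟩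
        exact h2.le
    have hvol : ENNReal.ofReal s ≤ μ (Iic y) := by
      rw [hIic y]
      calc ENNReal.ofReal s = volume (Ico (0:ℝ) s) := by rw [Real.volume_Ico]; ring_nf
        _ ≤ _ := measure_mono hsub2
    have : s ≤ cdf μ y := by
      rw [cdf_eq_real, measureReal_def]
      calc s = (ENNReal.ofReal s).toReal := by
            rw [ENNReal.toReal_ofReal (by linarith : (0:ℝ) ≤ s)]
        _ ≤ (μ (Iic y)).toReal := ENNReal.toReal_mono (measure_ne_top μ _) hvol
    linarith

end QAux

end

noncomputable section Main

open QAux ProbabilityTheory Filter Topology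

abbrev I01 : Set ℝ := Icc (0:ℝ) 1

/-- Clamping map `ℝ → [0,1]`. -/
def pI (x : ℝ) : I01 := projIcc 0 1 zero_le_one x

/-- The pushforward of `leb01` under (the clamped version of) `g`. -/
def mmap (g : ℝ → ℝ) : Measure I01 := leb01.map (fun t => pI (g t))

lemma mmap_congr {g₁ g₂ : ℝ → ℝ} (h : g₁ =ᵐ[leb01] g₂) : mmap g₁ = mmap g₂ :=
  Measure.map_congr (h.mono fun t ht => by show pI _ = pI _; rw [ht])

lemma aemeas_g {g : ℝ → ℝ} (hmono : MonotoneOn g (Ico (0:ℝ) 1)) :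
    AEMeasurable g leb01 :=
  aemeasurable_restrict_of_monotoneOn measurableSet_Ico hmono

lemma aemeas_pg {g : ℝ → ℝ} (hmono : MonotoneOn g (Ico (0:ℝ) 1)) :
    AEMeasurable (fun t => pI (g t)) leb01 :=
  continuous_projIcc.measurable.comp_aemeasurable (aemeas_g hmono)

lemma isProb_mmap {g : ℝ → ℝ} (hmono : MonotoneOn g (Ico (0:ℝ) 1)) :
    IsProbabilityMeasure (mmap g) :=
  Measure.isProbabilityMeasure_map (aemeas_pg hmono)

lemma val_pI {x : ℝ} (hx : x ∈ I01) : ((pI x : I01) : ℝ) = x := by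
  rw [pI, projIcc_of_mem _ hx]

lemma map_val_inj {ν₁ ν₂ : Measure I01}
    (h : ν₁.map Subtype.val = ν₂.map Subtype.val) : ν₁ = ν₂ := by
  have he : MeasurableEmbedding ((↑) : I01 → ℝ) :=
    MeasurableEmbedding.subtype_coe measurableSet_Icc
  ext s hs
  have h2 := congrArg (fun m : Measure ℝ => m (Subtype.val '' s)) h
  simpa [he.map_apply, Subtype.val_injective.preimage_image] using h2

/-- The measure on `ℝ` associated to a probability measure on `[0,1]`. -/
def mval (P : ProbabilityMeasure I01) : Measure ℝ :=
  (P : Measure I01).map Subtype.val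

instance (P : ProbabilityMeasure I01) : IsProbabilityMeasure (mval P) :=
  Measure.isProbabilityMeasure_map measurable_subtype_coe.aemeasurable

lemma mval_compl (P : ProbabilityMeasure I01) : mval P (Icc (0:ℝ) 1)ᶜ = 0 := by
  rw [mval, Measure.map_apply measurable_subtype_coe measurableSet_Icc.compl]
  have hpre : (Subtype.val ⁻¹' (Icc (0:ℝ) 1)ᶜ : Set I01) = ∅ := by
    ext y
    simp only [mem_preimage, mem_compl_iff, mem_empty_iff_false, iff_false, not_not]
    exact y.2
  rw [hpre]
  exact measure_empty

lemma mmap_val_Iic {g : ℝ → ℝ} (hmono : MonotoneOn g (Ico (0:ℝ) 1))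
    (hval : ∀ t ∈ Ico (0:ℝ) 1, g t ∈ Icc (0:ℝ) 1) (x : ℝ) :
    leb01 {u | g u ≤ x} = ((mmap g).map Subtype.val) (Iic x) := by
  rw [mmap, AEMeasurable.map_map_of_aemeasurable
    measurable_subtype_coe.aemeasurable (aemeas_pg hmono),
    Measure.map_apply_of_aemeasurable
      (measurable_subtype_coe.comp_aemeasurable (aemeas_pg hmono)) measurableSet_Iic]
  refine measure_congr ?_
  rw [eventuallyEq_set]
  filter_upwards [leb01_ae_mem] with u hu
  simp only [mem_setOf_eq, mem_preimage, Function.comp_apply, mem_Iic]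
  rw [val_pI (hval u hu)]

lemma memLp_quant (μ : Measure ℝ) : MemLp (quant μ) 2 leb01 := by
  refine MemLp.of_bound measurable_quant.aestronglyMeasurable 1
    (Filter.Eventually.of_forall fun t => ?_)
  rw [Real.norm_eq_abs, abs_le]
  exact ⟨by linarith [(quant_mem (μ := μ) (t := t)).1], (quant_mem).2⟩

lemma mmap_quant (P : ProbabilityMeasure I01) :
    mmap (quant (mval P)) = (P : Measure I01) := by
  apply map_val_inj
  have hmeas : Measurable fun t => pI (quant (mval P) t) :=
    continuous_projIcc.measurable.comp measurable_quant
  have h1 : (mmap (quant (mval P))).map Subtype.val = leb01.map (quant (mval P)) := by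
    rw [mmap, Measure.map_map measurable_subtype_coe hmeas]
    congr 1
    funext t
    exact val_pI quant_mem
  rw [h1, quant_map (mval_compl P)]
  rfl

/-- A choice of monotone right-continuous representative for `f ∈ 𝒢`. -/
def rep (f : GG) : ℝ → ℝ := (f.2 : ∃ g : ℝ → ℝ, MonotoneOn g (Ico (0:ℝ) 1) ∧
    (∀ t ∈ Ico (0:ℝ) 1, ContinuousWithinAt g (Ici t) t) ∧
    (∀ t ∈ Ico (0:ℝ) 1, g t ∈ Icc (0:ℝ) 1) ∧ ⇑(f : Lp ℝ 2 leb01) =ᵐ[leb01] g).choose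

lemma rep_spec (f : GG) : MonotoneOn (rep f) (Ico (0:ℝ) 1) ∧
    (∀ t ∈ Ico (0:ℝ) 1, ContinuousWithinAt (rep f) (Ici t) t) ∧
    (∀ t ∈ Ico (0:ℝ) 1, rep f t ∈ Icc (0:ℝ) 1) ∧
    ⇑(f : Lp ℝ 2 leb01) =ᵐ[leb01] rep f :=
  (f.2 : ∃ g : ℝ → ℝ, MonotoneOn g (Ico (0:ℝ) 1) ∧
    (∀ t ∈ Ico (0:ℝ) 1, ContinuousWithinAt g (Ici t) t) ∧
    (∀ t ∈ Ico (0:ℝ) 1, g t ∈ Icc (0:ℝ) 1) ∧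
    ⇑(f : Lp ℝ 2 leb01) =ᵐ[leb01] g).choose_spec

/-- The forward map `ρ`. -/
def rho (f : GG) : ProbabilityMeasure I01 :=
  ⟨mmap (rep f), isProb_mmap (rep_spec f).1⟩

/-- The inverse map `σ`. -/
def sig (P : ProbabilityMeasure I01) : GG :=
  ⟨(memLp_quant (mval P)).toLp (quant (mval P)),
   ⟨quant (mval P), quant_mono.monotoneOn _,
    fun t ht => quant_rightCont ht.2, fun _ _ => quant_mem,
    (memLp_quant (mval P)).coeFn_toLp⟩⟩

lemma sig_coe (P : ProbabilityMeasure I01) :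
    ⇑((sig P : GG) : Lp ℝ 2 leb01) =ᵐ[leb01] quant (mval P) :=
  (memLp_quant (mval P)).coeFn_toLp

lemma rho_of_rep {f : GG} {g : ℝ → ℝ} (hmono : MonotoneOn g (Ico (0:ℝ) 1))
    (hae : ⇑(f : Lp ℝ 2 leb01) =ᵐ[leb01] g) : (rho f : Measure I01) = mmap g := by
  have h1 : rep f =ᵐ[leb01] g := ((rep_spec f).2.2.2).symm.trans hae
  exact mmap_congr h1

lemma sig_rho (f : GG) : sig (rho f) = f := by
  have hspec := rep_spec f
  have hq : ∀ t ∈ Ico (0:ℝ) 1, rep f t = quant (mval (rho f)) t := by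
    refine eq_quant hspec.1 hspec.2.1 hspec.2.2.1 (mval_compl (rho f)) ?_
    intro x
    exact mmap_val_Iic hspec.1 hspec.2.2.1 x
  apply Subtype.ext
  apply Lp.ext (μ := leb01)
  refine (sig_coe (rho f)).trans ?_
  refine Filter.EventuallyEq.trans ?_ hspec.2.2.2.symm
  filter_upwards [leb01_ae_mem] with t ht
  exact (hq t ht).symm

lemma rho_sig (P : ProbabilityMeasure I01) : rho (sig P) = P := by
  apply Subtype.ext
  show mmap (rep (sig P)) = (P : Measure I01)
  have h1 : rep (sig P) =ᵐ[leb01] quant (mval P) :=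
    ((rep_spec (sig P)).2.2.2).symm.trans (sig_coe P)
  rw [mmap_congr h1, mmap_quant]

lemma integral_mmap {g : ℝ → ℝ} (hmono : MonotoneOn g (Ico (0:ℝ) 1))
    {φ : I01 → ℝ} (hφ : Continuous φ) :
    ∫ y, φ y ∂(mmap g) = ∫ t, φ (pI (g t)) ∂leb01 :=
  integral_map (aemeas_pg hmono) hφ.aestronglyMeasurable

lemma continuous_pI : Continuous pI := continuous_projIcc (h := zero_le_one)

lemma exists_nonatom (μ : Measure ℝ) [IsFiniteMeasure μ] {a b : ℝ} (hab : a < b) :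
    ∃ x, x ∈ Ioo a b ∧ μ {x} = 0 := by
  by_contra h
  push_neg at h
  have hsub : Ioo a b ⊆ {x : ℝ | 0 < μ {x}} := fun x hx =>
    pos_iff_ne_zero.2 (h x hx)
  have hc : Set.Countable {x : ℝ | 0 < μ {x}} :=
    Measure.countable_meas_pos_of_disjoint_iUnion
      (fun x => measurableSet_singleton x)
      (fun x y hxy => by
        simp only [Function.onFun, Set.disjoint_singleton]
        exact hxy)
  have hz := ((hc.mono hsub).measure_zero volume)
  rw [Real.volume_Ioo] at hz
  rw [ENNReal.ofReal_eq_zero] at hz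
  linarith

lemma cdf_tendsto {P : ProbabilityMeasure I01} {Ps : ℕ → ProbabilityMeasure I01}
    (hP : Filter.Tendsto Ps atTop (nhds P)) {x : ℝ} (hx : mval P {x} = 0) :
    Filter.Tendsto (fun n => cdf (mval (Ps n)) x) atTop (nhds (cdf (mval P) x)) := by
  set E : Set I01 := Subtype.val ⁻¹' Iic x with hE
  have hEm : MeasurableSet E := measurable_subtype_coe measurableSet_Iic
  have hfront : P (frontier E) = 0 := by
    have h1 : frontier E ⊆ Subtype.val ⁻¹' {x} := by
      refine subset_trans (continuous_subtype_val.frontier_preimage_subset _) ?_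
      rw [frontier_Iic]
    have h2 : (P : Measure I01) (frontier E) = 0 := by
      refine le_antisymm (le_trans (measure_mono h1) ?_) zero_le
      rw [mval, Measure.map_apply measurable_subtype_coe (measurableSet_singleton x)] at hx
      exact hx.le
    have h3 : (P (frontier E) : ℝ≥0∞) = 0 := by
      rw [MeasureTheory.ProbabilityMeasure.ennreal_coeFn_eq_coeFn_toMeasure]
      exact h2
    exact_mod_cast h3
  have key := MeasureTheory.ProbabilityMeasure.tendsto_measure_of_null_frontier_of_tendsto
    hP hfront
  have hcdf : ∀ Q : ProbabilityMeasure I01, cdf (mval Q) x = (Q E : ℝ) := by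
    intro Q
    rw [cdf_eq_real, measureReal_def, mval, Measure.map_apply measurable_subtype_coe measurableSet_Iic,
      show (Subtype.val ⁻¹' Iic x : Set I01) = E from rfl,
      ← MeasureTheory.ProbabilityMeasure.ennreal_coeFn_eq_coeFn_toMeasure,
      ENNReal.coe_toReal]
  simp_rw [hcdf]
  exact NNReal.tendsto_coe.2 key

lemma quant_tendsto {P : ProbabilityMeasure I01} {Ps : ℕ → ProbabilityMeasure I01}
    (hP : Filter.Tendsto Ps atTop (nhds P)) {t : ℝ} (ht : t ∈ Ioo (0:ℝ) 1)
    (hc : ContinuousAt (quant (mval P)) t) :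
    Filter.Tendsto (fun n => quant (mval (Ps n)) t) atTop (nhds (quant (mval P) t)) := by
  obtain ⟨ht0, ht1⟩ := ht
  refine tendsto_order.2 ⟨?_, ?_⟩
  · intro a ha
    rcases lt_or_ge a 0 with ha0 | ha0
    · filter_upwards with n
      exact lt_of_lt_of_le ha0 (quant_mem (μ := mval (Ps n)) (t := t)).1
    · obtain ⟨x, hxI, hxa⟩ := exists_nonatom (mval P) ha
      have hcdflt : cdf (mval P) x < t := by
        by_contra hcc
        push_neg at hcc
        have hall : ∀ t' ∈ Ioo (0:ℝ) t, quant (mval P) t' ≤ x := by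
          intro t' ht'
          refine quant_le_of_forall (mval_compl P) ht'.1.le (fun y hy => ?_)
          exact lt_of_lt_of_le ht'.2 (le_trans hcc (monotone_cdf _ hy.le))
        have hlim : Filter.Tendsto (quant (mval P)) (nhdsWithin t (Iio t))
            (nhds (quant (mval P) t)) := hc.tendsto.mono_left nhdsWithin_le_nhds
        have hle : quant (mval P) t ≤ x := by
          refine le_of_tendsto hlim ?_
          filter_upwards [Ioo_mem_nhdsLT_of_mem (⟨ht0, le_refl t⟩ : t ∈ Ioc 0 t)]
            with t' ht'
          exact hall t' ht'
        exact absurd hxI.2 (not_lt.2 hle)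
      have hev := (cdf_tendsto hP hxa).eventually_lt_const hcdflt
      filter_upwards [hev] with n hn
      by_contra hcon
      push_neg at hcon
      exact absurd (lt_cdf_of_quant_le (mval_compl (Ps n)) ht1 hcon hxI.1)
        (not_lt.2 hn.le)
  · intro b hb
    rcases lt_or_ge 1 b with hb1 | hb1
    · filter_upwards with n
      exact lt_of_le_of_lt (quant_mem (μ := mval (Ps n)) (t := t)).2 hb1
    · obtain ⟨x, hxI, hxa⟩ := exists_nonatom (mval P) hb
      have hcdfgt : t < cdf (mval P) x :=
        lt_cdf_of_quant_le (mval_compl P) ht1 (le_refl _) hxI.1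
      have hev := (cdf_tendsto hP hxa).eventually_const_lt hcdfgt
      filter_upwards [hev] with n hn
      have hx01 : x ∈ Icc (0:ℝ) 1 :=
        ⟨le_trans (quant_mem (μ := mval P) (t := t)).1 hxI.1.le,
         le_trans hxI.2.le hb1⟩
      exact lt_of_le_of_lt (quant_le_of_lt_cdf hx01 hn) hxI.2

lemma sig_tendsto {P : ProbabilityMeasure I01} {Ps : ℕ → ProbabilityMeasure I01}
    (hP : Filter.Tendsto Ps atTop (nhds P)) :
    Filter.Tendsto (fun n => sig (Ps n)) atTop (nhds (sig P)) := by
  have hD : Set.Countable {t : ℝ | ¬ ContinuousAt (quant (mval P)) t} :=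
    quant_mono.countable_not_continuousAt
  have hnull : leb01 ({t : ℝ | ¬ ContinuousAt (quant (mval P)) t} ∪ {0}) = 0 := by
    refine le_antisymm (le_trans (Measure.restrict_le_self _) ?_) zero_le
    exact ((hD.union (countable_singleton 0)).measure_zero volume).le
  have hae : ∀ᵐ t ∂leb01,
      Filter.Tendsto (fun n => quant (mval (Ps n)) t) atTop (nhds (quant (mval P) t)) := by
    filter_upwards [leb01_ae_mem, measure_eq_zero_iff_ae_notMem.1 hnull] with t htIco htn
    have hct : ContinuousAt (quant (mval P)) t := by
      by_contra hcc
      exact htn (Or.inl hcc)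
    have ht0 : t ≠ 0 := fun h => htn (Or.inr (by simp [h]))
    exact quant_tendsto hP ⟨lt_of_le_of_ne htIco.1 (Ne.symm ht0), htIco.2⟩ hct
  have hui : UnifIntegrable (fun n t => quant (mval (Ps n)) t) 2 leb01 := by
    intro ε hε
    refine ⟨ε^2, by positivity, fun i s hsm hμs => ?_⟩
    have hmono2 : eLpNorm (s.indicator fun t => quant (mval (Ps i)) t) 2 leb01
        ≤ eLpNorm (s.indicator fun _ => (1:ℝ)) 2 leb01 := by
      refine eLpNorm_mono (fun t => ?_)
      by_cases hts : t ∈ s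
      · simp only [Set.indicator_of_mem hts, Real.norm_eq_abs, abs_le, norm_one]
        constructor
        · linarith [(quant_mem (μ := mval (Ps i)) (t := t)).1]
        · exact (quant_mem (μ := mval (Ps i)) (t := t)).2
      · simp [Set.indicator_of_notMem hts]
    refine le_trans hmono2 ?_
    rw [eLpNorm_indicator_const hsm (by norm_num) (by norm_num)]
    simp only [enorm_one, one_mul]
    have h2 : ((2:ℝ≥0∞)).toReal = 2 := by norm_num
    rw [h2]
    calc leb01 s ^ (1/(2:ℝ)) ≤ ENNReal.ofReal (ε^2) ^ (1/(2:ℝ)) :=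
          ENNReal.rpow_le_rpow hμs (by norm_num)
      _ = ENNReal.ofReal ε := by
          rw [ENNReal.ofReal_rpow_of_nonneg (by positivity) (by norm_num)]
          congr 1
          rw [← Real.rpow_natCast ε 2, ← Real.rpow_mul hε.le]
          norm_num
  have hLp : Filter.Tendsto
      (fun n => eLpNorm ((fun t => quant (mval (Ps n)) t) - quant (mval P)) 2 leb01)
      atTop (nhds 0) :=
    tendsto_Lp_finite_of_tendsto_ae one_le_two (by norm_num)
      (fun n => measurable_quant.aestronglyMeasurable) (memLp_quant _) hui hae
  rw [tendsto_subtype_rng]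
  rw [tendsto_iff_dist_tendsto_zero]
  have hdist : ∀ n, dist (((sig (Ps n)) : GG) : Lp ℝ 2 leb01) ((sig P : GG) : Lp ℝ 2 leb01)
      = (eLpNorm ((fun t => quant (mval (Ps n)) t) - quant (mval P)) 2 leb01).toReal := by
    intro n
    rw [Lp.dist_def]
    congr 1
    exact eLpNorm_congr_ae ((sig_coe (Ps n)).sub (sig_coe P))
  simp_rw [hdist]
  have hfin := (ENNReal.tendsto_toReal (by norm_num : (0:ℝ≥0∞) ≠ ⊤)).comp hLp
  simpa [Function.comp_def] using hfin

lemma rho_seq_cont : SeqContinuous rho := by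
  intro fs f hf
  rw [MeasureTheory.ProbabilityMeasure.tendsto_iff_forall_integral_tendsto]
  intro ψ
  have heq : ∀ h : GG, ∫ y, ψ y ∂((rho h : Measure I01)) = ∫ t, ψ (pI (rep h t)) ∂leb01 :=
    fun h => integral_mmap (rep_spec h).1 ψ.continuous
  simp only [Function.comp_def]
  simp_rw [heq]
  refine Filter.tendsto_of_subseq_tendsto (fun ns hns => ?_)
  have h1 : Filter.Tendsto (fun k => ((fs (ns k) : GG) : Lp ℝ 2 leb01)) atTop
      (nhds ((f : GG) : Lp ℝ 2 leb01)) :=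
    tendsto_subtype_rng.1 (hf.comp hns)
  have h2 : Filter.Tendsto
      (fun k => eLpNorm (⇑((fs (ns k) : GG) : Lp ℝ 2 leb01) - ⇑((f : GG) : Lp ℝ 2 leb01)) 2 leb01)
      atTop (nhds 0) := by
    have hd := tendsto_iff_dist_tendsto_zero.1 h1
    have heq2 : ∀ k, eLpNorm (⇑((fs (ns k) : GG) : Lp ℝ 2 leb01) - ⇑((f : GG) : Lp ℝ 2 leb01)) 2 leb01
        = ENNReal.ofReal (dist (((fs (ns k) : GG)) : Lp ℝ 2 leb01) ((f : GG) : Lp ℝ 2 leb01)) := by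
      intro k
      rw [Lp.dist_def, ENNReal.ofReal_toReal]
      rw [eLpNorm_congr_ae (Lp.coeFn_sub _ _).symm]
      exact Lp.eLpNorm_ne_top _
    simp_rw [heq2]
    have := ENNReal.tendsto_ofReal hd
    simpa using this
  have h3 : TendstoInMeasure leb01 (fun k => ⇑((fs (ns k) : GG) : Lp ℝ 2 leb01)) atTop
      ⇑((f : GG) : Lp ℝ 2 leb01) :=
    tendstoInMeasure_of_tendsto_eLpNorm (by norm_num : (2:ℝ≥0∞) ≠ 0)
      (fun k => Lp.aestronglyMeasurable _) (Lp.aestronglyMeasurable _) h2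
  obtain ⟨ms, _, haemm⟩ := h3.exists_seq_tendsto_ae
  refine ⟨ms, ?_⟩
  have haeg : ∀ᵐ t ∂leb01,
      Filter.Tendsto (fun k => rep (fs (ns (ms k))) t) atTop (nhds (rep f t)) := by
    have hrepeq : ∀ᵐ t ∂leb01, ∀ k,
        ⇑((fs (ns (ms k)) : GG) : Lp ℝ 2 leb01) t = rep (fs (ns (ms k))) t :=
      ae_all_iff.2 (fun k => (rep_spec _).2.2.2)
    filter_upwards [haemm, hrepeq, (rep_spec f).2.2.2] with t hh1 hh2 hh3
    rw [← hh3]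
    exact Filter.Tendsto.congr hh2 hh1
  refine tendsto_integral_of_dominated_convergence (fun _ => ‖ψ‖) ?_ ?_ ?_ ?_
  · intro k
    exact ((ψ.continuous.comp continuous_pI).measurable.comp_aemeasurable
      (aemeas_g (rep_spec _).1)).aestronglyMeasurable
  · exact integrable_const _
  · intro k
    filter_upwards with t
    exact ψ.norm_coe_le_norm _
  · filter_upwards [haeg] with t ht
    exact ((ψ.continuous.comp continuous_pI).tendsto _).comp ht

/-- `ρ` as an equivalence. -/
def rhoEquiv : GG ≃ ProbabilityMeasure I01 := ⟨rho, sig, sig_rho, rho_sig⟩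

/-- `ρ` as a homeomorphism. -/
def rhoHomeo : GG ≃ₜ ProbabilityMeasure I01 :=
  { rhoEquiv with
    continuous_toFun := SeqContinuous.continuous rho_seq_cont
    continuous_invFun := SeqContinuous.continuous (fun _ _ hP => sig_tendsto hP) }

/-- The map `ρ : g ↦ g_*(Leb|_{[0,1)})` is a bijection from `𝒢` onto the Borel
probability measures on `[0,1]`, and it is a homeomorphism between `𝒢` with the
`L²`-metric and `𝒫([0,1])` with the topology of weak convergence: there is a
homeomorphism `ρ` such that, whenever `g` is a nondecreasing right-continuous
`[0,1]`-valued representative of `f ∈ 𝒢`, the measure `ρ f` integrates every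
continuous `φ : [0,1] → ℝ` to `∫_{[0,1)} φ(g(t)) dt`. -/
theorem pushforward_homeomorphism :
    ∃ ρ : GG ≃ₜ ProbabilityMeasure (Icc (0:ℝ) 1),
      ∀ (f : GG) (g : ℝ → ℝ), MonotoneOn g (Ico (0:ℝ) 1) →
        (∀ t ∈ Ico (0:ℝ) 1, ContinuousWithinAt g (Ici t) t) →
        (∀ t ∈ Ico (0:ℝ) 1, g t ∈ Icc (0:ℝ) 1) →
        ⇑(f : Lp ℝ 2 leb01) =ᵐ[leb01] g →
        ∀ φ : C(Icc (0:ℝ) 1, ℝ),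
          ∫ y, φ y ∂(ρ f : Measure (Icc (0:ℝ) 1)) =
            ∫ t in Ico (0:ℝ) 1, φ (projIcc 0 1 zero_le_one (g t)) := by
  refine ⟨rhoHomeo, ?_⟩
  intro f g hmono hrc hval hae φ
  have h0 : (rhoHomeo f : ProbabilityMeasure I01) = rho f := rfl
  have h1 : ((rhoHomeo f : ProbabilityMeasure I01) : Measure I01) = mmap g := by
    rw [h0]
    exact rho_of_rep hmono hae
  rw [h1, integral_mmap hmono φ.continuous]
  rfl

end Main
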